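/- Let Ω ⊆ ℝ^n be Lebesgue measurable with 0 < |Ω| < ∞, let E be a finite-dimensional real normed space, let κ ≥ 1 and Q : E → ℝ satisfy κ⁻¹·‖M‖² ≤ Q(M) ≤ κ·‖M‖² for all M ∈ E. Let ψ : [0,1] → [0,∞) be nonincreasing and convex with ψ(1) = 0 and ψ(λ) > 0 for every λ ∈ [0,1). Fix α > 0, ε > 0 with α·ε ≤ 1, and let σ satisfy 0 < σ < sup_{λ ∈ (0,1)} [ 2·√(α·ψ(λ)) / ( √κ · (1 + 2·√(α·|Ω|·ψ(λ)/λ)) ) ]. Then there exists δ ∈ (0,1], depending only on α, κ, |Ω|, ψ and σ, with the following property: for every measurable v : Ω → ℝ with α·ε ≤ v(x) ≤ 1 for a.e. x, every measurable e : Ω → E with ∫_Ω v·Q(e) dx < ∞, and every Lebesgue-integrable f : Ω → ℝ with f(x) ≥ −σ·‖e(x)‖ for a.e. x, one has δ·W ≤ W + ∫_Ω f dx + 1, where W := ∫_Ω v·Q(e) dx + ε⁻¹·∫_Ω ψ(v) dx. (Equivalently, W ≤ δ⁻¹·( W + ∫_Ω f dx + 1 ), i.e. the Ambrosio–Tortorelli-type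 energy W is controlled by the total energy W + ∫ f plus a constant.) -/

import Mathlib

open MeasureTheory Filter Set

private lemma aux_small (σ s sa sp sk ε a w q ψw : ℝ)
    (hσ0 : 0 < σ) (hs : s * (2 * sa * sp) = σ * sk)
    (hsa0 : 0 < sa) (hsp0 : 0 < sp) (hsk0 : 0 < sk) (hε : 0 < ε)
    (hq0 : 0 ≤ q) (ha0 : 0 ≤ a)
    (ha2 : a ^ 2 ≤ sk ^ 2 * q) (hw : sa ^ 2 * ε ≤ w) (hψ : sp ^ 2 ≤ ψw) :
    σ * a ≤ s * (w * q) + (s * ε⁻¹) * ψw := by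
  have hs0 : 0 < s := by
    have h1 : 0 < σ * sk := by positivity
    rw [← hs] at h1
    nlinarith [h1, mul_pos hsa0 hsp0]
  have h1 : sa ^ 2 * ε * a ^ 2 ≤ sk ^ 2 * (w * q) := by
    nlinarith [mul_le_mul_of_nonneg_left ha2 (by positivity : (0:ℝ) ≤ sa ^ 2 * ε),
      mul_le_mul_of_nonneg_right hw hq0]
  have h2 : σ * a * ε * sk ^ 2 ≤ s * (w * q) * ε * sk ^ 2 + s * sp ^ 2 * sk ^ 2 := by
    have hint1 : s * ε * (sa ^ 2 * ε * a ^ 2) ≤ s * ε * (sk ^ 2 * (w * q)) :=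
      mul_le_mul_of_nonneg_left h1 (by positivity)
    have hint2 : 0 ≤ s * (sa * ε * a - sp * sk) ^ 2 :=
      mul_nonneg hs0.le (sq_nonneg _)
    have hsdef2 : σ * (sk * (sk * ε * a)) = 2 * s * sa * sp * (sk * ε * a) := by
      calc σ * (sk * (sk * ε * a)) = (s * (2 * sa * sp)) * (sk * ε * a) := by
            rw [hs]; ring
        _ = 2 * s * sa * sp * (sk * ε * a) := by ring
    nlinarith [hint1, hint2, hsdef2]
  have h3 : σ * a ≤ s * (w * q) + s * (ε⁻¹ * sp ^ 2) := by
    have hmpos : (0:ℝ) < ε * sk ^ 2 := by positivity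
    apply le_of_mul_le_mul_right _ hmpos
    calc σ * a * (ε * sk ^ 2) = σ * a * ε * sk ^ 2 := by ring
      _ ≤ s * (w * q) * ε * sk ^ 2 + s * sp ^ 2 * sk ^ 2 := h2
      _ = (s * (w * q) + s * (ε⁻¹ * sp ^ 2)) * (ε * sk ^ 2) := by
          field_simp
  have h4 : s * (ε⁻¹ * sp ^ 2) ≤ (s * ε⁻¹) * ψw := by
    have := mul_le_mul_of_nonneg_left hψ (by positivity : (0:ℝ) ≤ s * ε⁻¹)
    nlinarith [this]
  linarith

private lemma aux_large (σ s r sl sV sk a w q VΩ : ℝ)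
    (hσ0 : 0 < σ) (hsl0 : 0 < sl) (hsV0 : 0 < sV) (hsk0 : 0 < sk)
    (hV : VΩ = sV ^ 2) (hsr : s * r = σ * sk * sV / (2 * sl))
    (hq0 : 0 ≤ q) (ha0 : 0 ≤ a) (ha2 : a ^ 2 ≤ sk ^ 2 * q) (hw : sl ^ 2 ≤ w) :
    σ * a ≤ 2 * (s * r) * (w * q) + s * r / (2 * VΩ) := by
  have h1L : sl ^ 2 * a ^ 2 ≤ sk ^ 2 * (w * q) := by
    nlinarith [mul_le_mul_of_nonneg_left ha2 (by positivity : (0:ℝ) ≤ sl ^ 2),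
      mul_le_mul_of_nonneg_right hw hq0]
  have hP : 4 * sl * sV * sk * a ≤ 4 * sV ^ 2 * sk ^ 2 * (w * q) + sk ^ 2 := by
    nlinarith [sq_nonneg (2 * sV * sl * a - sk),
      mul_le_mul_of_nonneg_left h1L (by positivity : (0:ℝ) ≤ 4 * sV ^ 2)]
  have hmpos : (0:ℝ) < 4 * sl * sV * sk := by positivity
  apply le_of_mul_le_mul_right _ hmpos
  calc σ * a * (4 * sl * sV * sk) = σ * (4 * sl * sV * sk * a) := by ring
    _ ≤ σ * (4 * sV ^ 2 * sk ^ 2 * (w * q) + sk ^ 2) :=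
        mul_le_mul_of_nonneg_left hP hσ0.le
    _ = (2 * (s * r) * (w * q) + s * r / (2 * VΩ)) * (4 * sl * sV * sk) := by
        rw [hsr, hV]; field_simp; ring

private lemma aux_final (s r A X F N : ℝ) (hs : 0 < s) (hr : 0 < r)
    (hkey : s * (1 + 2 * r) < 1) (hA : 0 ≤ A) (hX : 0 ≤ X)
    (hN : N ≤ (s + 2 * s * r) * A + s * X + s * r / 2) (hF : -N ≤ F) :
    (1 - s * (1 + 2 * r)) * (A + X) ≤ (A + X) + F + 1 := by
  nlinarith [hN, hF, hA, hX, hs.le, hr.le, hkey,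
    mul_nonneg (mul_nonneg hs.le hr.le) hX,
    mul_nonneg (mul_nonneg hs.le hr.le) hA]

set_option maxHeartbeats 1000000 in
theorem stmt_6 {n : ℕ} (Ω : Set (EuclideanSpace ℝ (Fin n)))
    (hΩm : MeasurableSet Ω) (hΩpos : 0 < volume Ω) (hΩfin : volume Ω ≠ ⊤)
    {E : Type*} [NormedAddCommGroup E] [NormedSpace ℝ E] [FiniteDimensional ℝ E]
    [MeasurableSpace E] [BorelSpace E]
    (κ : ℝ) (hκ : 1 ≤ κ)
    (Q : E → ℝ) (hQ : ∀ M : E, κ⁻¹ * ‖M‖ ^ 2 ≤ Q M ∧ Q M ≤ κ * ‖M‖ ^ 2)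
    (ψ : ℝ → ℝ)
    (hψmono : AntitoneOn ψ (Icc 0 1)) (hψconv : ConvexOn ℝ (Icc 0 1) ψ)
    (hψ1 : ψ 1 = 0) (hψnn : ∀ t ∈ Icc (0:ℝ) 1, 0 ≤ ψ t)
    (hψpos : ∀ l ∈ Ico (0:ℝ) 1, 0 < ψ l)
    (α : ℝ) (hα : 0 < α)
    (σ : ℝ) (hσ0 : 0 < σ)
    (hσ : σ < ⨆ l : Ioo (0:ℝ) 1,
        2 * Real.sqrt (α * ψ l) /
          (Real.sqrt κ * (1 + 2 * Real.sqrt (α * (volume Ω).toReal * ψ l / l)))) :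
    ∃ δ ∈ Ioc (0:ℝ) 1,
      ∀ ε : ℝ, 0 < ε → α * ε ≤ 1 →
      ∀ v : EuclideanSpace ℝ (Fin n) → ℝ, Measurable v →
        (∀ᵐ x ∂(volume.restrict Ω), α * ε ≤ v x ∧ v x ≤ 1) →
      ∀ e : EuclideanSpace ℝ (Fin n) → E, Measurable e →
        IntegrableOn (fun x => v x * Q (e x)) Ω →
        IntegrableOn (fun x => ψ (v x)) Ω →
      ∀ f : EuclideanSpace ℝ (Fin n) → ℝ, IntegrableOn f Ω →
        (∀ᵐ x ∂(volume.restrict Ω), -σ * ‖e x‖ ≤ f x) →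
        δ * ((∫ x in Ω, v x * Q (e x)) + ε⁻¹ * ∫ x in Ω, ψ (v x))
          ≤ ((∫ x in Ω, v x * Q (e x)) + ε⁻¹ * ∫ x in Ω, ψ (v x))
            + (∫ x in Ω, f x) + 1 := by
  classical
  haveI : Nonempty (Ioo (0:ℝ) 1) := ⟨⟨1/2, by norm_num⟩⟩
  obtain ⟨⟨l, hl⟩, hσl⟩ := exists_lt_of_lt_ciSup hσ
  simp only at hσl
  set VΩ : ℝ := (volume Ω).toReal with hVΩdef
  have hVpos : 0 < VΩ := ENNReal.toReal_pos hΩpos.ne' hΩfin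
  have hκ0 : (0:ℝ) < κ := lt_of_lt_of_le one_pos hκ
  have hl0 : 0 < l := hl.1
  have hl1 : l < 1 := hl.2
  have hψl : 0 < ψ l := hψpos l ⟨hl0.le, hl1⟩
  set sa : ℝ := Real.sqrt α with hsadef
  set sp : ℝ := Real.sqrt (ψ l) with hspdef
  set sk : ℝ := Real.sqrt κ with hskdef
  set sl : ℝ := Real.sqrt l with hsldef
  set sV : ℝ := Real.sqrt VΩ with hsVdef
  have hsa : sa ^ 2 = α := Real.sq_sqrt hα.le
  have hsp : sp ^ 2 = ψ l := Real.sq_sqrt hψl.le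
  have hsk : sk ^ 2 = κ := Real.sq_sqrt hκ0.le
  have hsl : sl ^ 2 = l := Real.sq_sqrt hl0.le
  have hsV : sV ^ 2 = VΩ := Real.sq_sqrt hVpos.le
  have hsa0 : 0 < sa := Real.sqrt_pos.mpr hα
  have hsp0 : 0 < sp := Real.sqrt_pos.mpr hψl
  have hsk0 : 0 < sk := Real.sqrt_pos.mpr hκ0
  have hsl0 : 0 < sl := Real.sqrt_pos.mpr hl0
  have hsV0 : 0 < sV := Real.sqrt_pos.mpr hVpos
  set r : ℝ := sa * sV * sp / sl with hrdef
  have hr0 : 0 < r := by positivity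
  have hr_eq : Real.sqrt (α * VΩ * ψ l / l) = r := by
    have h1 : α * VΩ * ψ l / l = (sa * sV * sp / sl) ^ 2 := by
      rw [div_pow, mul_pow, mul_pow, hsa, hsp, hsl, hsV]
    rw [h1, Real.sqrt_sq (by positivity)]
  have hsqrtαψ : Real.sqrt (α * ψ l) = sa * sp := Real.sqrt_mul hα.le _
  set s : ℝ := σ * sk / (2 * sa * sp) with hsdef
  have hs0 : 0 < s := by positivity
  have hsrel : s * (2 * sa * sp) = σ * sk := by
    rw [hsdef]; exact div_mul_cancel₀ _ (by positivity)
  have hsr : s * r = σ * sk * sV / (2 * sl) := by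
    rw [hsdef, hrdef]; field_simp
  -- from hσl deduce s * (1 + 2*r) < 1
  have hkey : s * (1 + 2 * r) < 1 := by
    rw [hr_eq, hsqrtαψ] at hσl
    have hden : 0 < sk * (1 + 2 * r) := by positivity
    have h2 : σ * (sk * (1 + 2 * r)) < 2 * (sa * sp) := (lt_div_iff₀ hden).mp hσl
    have h3 : s * (1 + 2 * r) = σ * (sk * (1 + 2 * r)) / (2 * (sa * sp)) := by
      rw [hsdef]; field_simp
    rw [h3, div_lt_one (by positivity)]
    exact h2
  have hδ1 : 1 - s * (1 + 2 * r) ≤ 1 := by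
    have h := mul_nonneg hs0.le (by positivity : (0:ℝ) ≤ 1 + 2 * r)
    linarith only [h]
  refine ⟨1 - s * (1 + 2 * r), ⟨by linarith only [hkey], hδ1⟩, ?_⟩
  intro ε hε hαε v hvmeas hv e hemeas hvQ hψint f hfint hfae
  set A : ℝ := ∫ x in Ω, v x * Q (e x) with hAdef
  set B : ℝ := ∫ x in Ω, ψ (v x) with hBdef
  -- pointwise bound
  set g : EuclideanSpace ℝ (Fin n) → ℝ :=
    fun x => (s + 2 * s * r) * (v x * Q (e x)) + (s * ε⁻¹) * ψ (v x) + s * r / (2 * VΩ)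
    with hgdef
  have hae : ∀ᵐ x ∂(volume.restrict Ω), σ * ‖e x‖ ≤ g x := by
    filter_upwards [hv] with x hx
    obtain ⟨hxl, hxu⟩ := hx
    set a : ℝ := ‖e x‖ with hadef
    set q : ℝ := Q (e x) with hqdef
    set w : ℝ := v x with hwdef
    have hq1 : κ⁻¹ * a ^ 2 ≤ q := (hQ (e x)).1
    have hq0 : 0 ≤ q := le_trans (by positivity) hq1
    have ha2 : a ^ 2 ≤ sk ^ 2 * q := by
      rw [hsk]
      rw [inv_mul_le_iff₀ hκ0] at hq1; exact hq1
    have hw0 : 0 < w := lt_of_lt_of_le (by positivity) hxl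
    have hψw0 : 0 ≤ ψ w := hψnn w ⟨hw0.le, hxu⟩
    have ha0 : (0:ℝ) ≤ a := norm_nonneg _
    show σ * a ≤ (s + 2 * s * r) * (w * q) + (s * ε⁻¹) * ψ w + s * r / (2 * VΩ)
    rcases le_or_gt w l with hwl | hwl
    · -- small v case
      have hψwl : ψ l ≤ ψ w :=
        hψmono ⟨hw0.le, hxu⟩ ⟨hl0.le, hl1.le⟩ hwl
      have h3 : σ * a ≤ s * (w * q) + (s * ε⁻¹) * ψ w :=
        aux_small σ s sa sp sk ε a w q (ψ w) hσ0 hsrel hsa0 hsp0 hsk0 hε hq0 ha0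
          ha2 (by rw [hsa]; exact hxl) (by rw [hsp]; exact hψwl)
      have hextra1 : 0 ≤ 2 * s * r * (w * q) := by positivity
      have hextra2 : 0 ≤ s * r / (2 * VΩ) := by positivity
      linarith only [h3, hextra1, hextra2]
    · -- large v case
      have hgoal : σ * a ≤ 2 * (s * r) * (w * q) + s * r / (2 * VΩ) :=
        aux_large σ s r sl sV sk a w q VΩ hσ0 hsl0 hsV0 hsk0 hsV.symm hsr hq0 ha0
          ha2 (by rw [hsl]; exact hwl.le)
      have hextra1 : 0 ≤ s * (w * q) := by positivity
      have hextra2 : 0 ≤ (s * ε⁻¹) * ψ w := by positivity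
      linarith only [hgoal, hextra1, hextra2]
  -- integrability
  have hInt1 : IntegrableOn (fun x => (s + 2 * s * r) * (v x * Q (e x))) Ω :=
    hvQ.const_mul _
  have hInt2 : IntegrableOn (fun x => (s * ε⁻¹) * ψ (v x)) Ω :=
    hψint.const_mul _
  have hInt3 : IntegrableOn (fun _ => s * r / (2 * VΩ)) Ω := by
    exact integrableOn_const hΩfin
  have hIntg : IntegrableOn g Ω := (hInt1.add hInt2).add hInt3
  have hNmeas : AEStronglyMeasurable (fun x => σ * ‖e x‖) (volume.restrict Ω) :=
    (measurable_const.mul hemeas.norm).aestronglyMeasurable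
  have hIntN : IntegrableOn (fun x => σ * ‖e x‖) Ω := by
    apply Integrable.mono' hIntg hNmeas
    filter_upwards [hae] with x hx
    rwa [Real.norm_eq_abs, abs_of_nonneg (by positivity)]
  set N : ℝ := ∫ x in Ω, σ * ‖e x‖ with hNdef
  have hFN : -N ≤ ∫ x in Ω, f x := by
    have hIntneg : IntegrableOn (fun x => -(σ * ‖e x‖)) Ω := hIntN.neg
    have h : ∫ x in Ω, -(σ * ‖e x‖) ≤ ∫ x in Ω, f x := by
      apply integral_mono_ae hIntneg hfint
      filter_upwards [hfae] with x hx
      show -(σ * ‖e x‖) ≤ f x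
      linarith only [hx]
    rwa [integral_neg] at h
  have hNg : N ≤ (s + 2 * s * r) * A + (s * ε⁻¹) * B + s * r / 2 := by
    have h := integral_mono_ae hIntN hIntg hae
    have hgint : ∫ x in Ω, g x =
        (s + 2 * s * r) * A + (s * ε⁻¹) * B + s * r / 2 := by
      have hb : (∫ x in Ω, ((s + 2 * s * r) * (v x * Q (e x)) + (s * ε⁻¹) * ψ (v x)))
          = (∫ x in Ω, (s + 2 * s * r) * (v x * Q (e x)))
            + ∫ x in Ω, (s * ε⁻¹) * ψ (v x) :=
        integral_add hInt1 hInt2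
      have ha : (∫ x in Ω, g x)
          = (∫ x in Ω, ((s + 2 * s * r) * (v x * Q (e x)) + (s * ε⁻¹) * ψ (v x)))
            + ∫ x in Ω, (fun _ => s * r / (2 * VΩ)) x :=
        integral_add (hInt1.add hInt2) hInt3
      rw [ha, hb, integral_const_mul, integral_const_mul, setIntegral_const, smul_eq_mul,
        measureReal_def, ← hVΩdef, ← hAdef, ← hBdef]
      field_simp
    rw [← hgint]; exact h
  -- positivity of A and B
  have hA0 : 0 ≤ A := by
    apply setIntegral_nonneg_of_ae_restrict
    filter_upwards [hv] with x hx
    have hq1 := (hQ (e x)).1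
    have hq0 : 0 ≤ Q (e x) := le_trans (by positivity) hq1
    have hv0 : 0 ≤ v x := le_trans (by positivity) hx.1
    exact mul_nonneg hv0 hq0
  have hB0 : 0 ≤ B := by
    apply setIntegral_nonneg_of_ae_restrict
    filter_upwards [hv] with x hx
    have hv0 : 0 ≤ v x := le_trans (by positivity) hx.1
    exact hψnn _ ⟨hv0, hx.2⟩
  have hX0 : 0 ≤ ε⁻¹ * B := by positivity
  have hN' : N ≤ (s + 2 * s * r) * A + s * (ε⁻¹ * B) + s * r / 2 := by
    linarith only [hNg]
  exact aux_final s r A (ε⁻¹ * B) (∫ x in Ω, f x) N hs0 hr0 hkey hA0 hX0 hN' hFN
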